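/- arXiv:1710.08515 — 3 statements merged into one kernel-verified Lean document; each statement's English description precedes it below -/
import Mathlib

section
/- Let f be a real-valued locally integrable function on ℝⁿ and ℬ a basis of measurable sets of positive finite measure. If sup_{B ∈ ℬ} avg_B e^{|f - f_B|} = C₀ < ∞, then ‖f‖_{𝒷ℳ𝒪_ℬ} := sup_{B ∈ ℬ} ‖f - f_B‖_{exp L, B} ≤ max{1, log₂ C₀}. -/
open MeasureTheory

noncomputable section

/-- Average of `f` over `B` with respect to `μ`. -/
def avgm {X : Type*} [MeasurableSpace X] (μ : Measure X) (B : Set X) (f : X → ℝ) : ℝ :=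
  (μ B).toReal⁻¹ * ∫ x in B, f x ∂μ

/-- Localized normalized `exp L` norm of `f` on `B`. -/
def expLNorm {X : Type*} [MeasurableSpace X] (μ : Measure X) (B : Set X) (f : X → ℝ) : ℝ :=
  sInf {l : ℝ | 0 < l ∧ avgm μ B (fun x => Real.exp (|f x| / l)) ≤ 2}

/-- Axis-parallel cubes in `ℝⁿ`. -/
def IsCube {n : ℕ} (Q : Set (Fin n → ℝ)) : Prop :=
  ∃ (c : Fin n → ℝ) (h : ℝ), 0 < h ∧ Q = Set.univ.pi fun i => Set.Icc (c i) (c i + h)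

/-- Average over a subset of `ℝⁿ` with respect to Lebesgue measure. -/
def avgQ {n : ℕ} (Q : Set (Fin n → ℝ)) (f : (Fin n → ℝ) → ℝ) : ℝ :=
  avgm MeasureTheory.volume Q f

/-- `‖f - f_Q‖_{exp L, Q}`. -/
def oscExp {n : ℕ} (Q : Set (Fin n → ℝ)) (f : (Fin n → ℝ) → ℝ) : ℝ :=
  expLNorm MeasureTheory.volume Q (fun x => f x - avgQ Q f)

def bmoSet {n : ℕ} (f : (Fin n → ℝ) → ℝ) : Set ℝ :=
  {r | ∃ Q : Set (Fin n → ℝ), IsCube Q ∧ r = oscExp Q f}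

/-- `‖f‖_{𝒷ℳ𝒪} = sup_Q ‖f - f_Q‖_{exp L, Q}`. -/
def calBMONorm {n : ℕ} (f : (Fin n → ℝ) → ℝ) : ℝ := sSup (bmoSet f)

def FiniteBMO {n : ℕ} (f : (Fin n → ℝ) → ℝ) : Prop := BddAbove (bmoSet f)

/-- The `A_p` ratio of the weight `w` over the cube `Q` (for `1 < p < ∞`). -/
def apRatio {n : ℕ} (p : ℝ) (w : (Fin n → ℝ) → ℝ) (Q : Set (Fin n → ℝ)) : ℝ :=
  avgQ Q w * (avgQ Q fun x => w x ^ (1 - p / (p - 1))) ^ (p - 1)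

def apSet {n : ℕ} (p : ℝ) (w : (Fin n → ℝ) → ℝ) : Set ℝ :=
  {r | ∃ Q, IsCube Q ∧ r = apRatio p w Q}

/-- The Muckenhoupt constant `[w]_{A_p}`. -/
def apConst {n : ℕ} (p : ℝ) (w : (Fin n → ℝ) → ℝ) : ℝ := sSup (apSet p w)

/-- Membership in the Muckenhoupt class `A_p`, `1 < p < ∞`. -/
def MemAp {n : ℕ} (p : ℝ) (w : (Fin n → ℝ) → ℝ) : Prop := BddAbove (apSet p w)

/-- If `sup_{B ∈ ℬ} avg_B e^{|f - f_B|} ≤ C₀ < ∞` then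
`‖f‖_{𝒷ℳ𝒪_ℬ} ≤ max{1, log₂ C₀}`. -/
theorem statement4 {n : ℕ} (f : (Fin n → ℝ) → ℝ)
    (hf : LocallyIntegrable f MeasureTheory.volume)
    (ℬ : Set (Set (Fin n → ℝ)))
    (hℬ : ∀ B ∈ ℬ, MeasurableSet B ∧ 0 < MeasureTheory.volume B ∧
      MeasureTheory.volume B < ⊤)
    (C₀ : ℝ)
    (hC : ∀ B ∈ ℬ, avgQ B (fun x => Real.exp |f x - avgQ B f|) ≤ C₀) :
    ∀ B ∈ ℬ, expLNorm MeasureTheory.volume B (fun x => f x - avgQ B f) ≤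
      max 1 (Real.logb 2 C₀) := by
  
  intro B hB
  obtain ⟨hBm, hB0, hBt⟩ := hℬ B hB
  set c := avgQ B f with hc
  set M := max 1 (Real.logb 2 C₀) with hM
  set E : (Fin n → ℝ) → ℝ := fun x => Real.exp |f x - c| with hE
  have hM1 : (1:ℝ) ≤ M := le_max_left _ _
  have hM0 : (0:ℝ) < M := lt_of_lt_of_le one_pos hM1
  have hbdd : BddBelow {l : ℝ | 0 < l ∧
      avgm MeasureTheory.volume B (fun x => Real.exp (|f x - c| / l)) ≤ 2} :=
    ⟨0, fun x hx => hx.1.le⟩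
  rw [expLNorm]
  by_cases hint : Integrable E (MeasureTheory.volume.restrict B)
  · -- Integrable case: show M belongs to the set
    apply csInf_le hbdd
    refine ⟨hM0, ?_⟩
    set μ' := MeasureTheory.volume.restrict B with hμ'
    haveI : IsFiniteMeasure μ' := ⟨by rwa [hμ', Measure.restrict_apply_univ]⟩
    haveI : NeZero μ' := ⟨by
      intro h
      have := Measure.restrict_apply_univ (μ := (MeasureTheory.volume : Measure (Fin n → ℝ))) B
      rw [← hμ', h] at this
      simp at this
      exact hB0.ne' this.symm⟩
    have hθ0 : (0:ℝ) < 1 / M := by positivity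
    have hθ1 : 1 / M ≤ 1 := by
      rw [div_le_one hM0]; exact hM1
    -- a.e. strong measurability of E
    have hu : AEStronglyMeasurable (fun x => |f x - c|) μ' :=
      (continuous_abs.comp_aestronglyMeasurable
        ((hf.aestronglyMeasurable.restrict).sub aestronglyMeasurable_const))
    have hEsm : AEStronglyMeasurable E μ' :=
      Real.continuous_exp.comp_aestronglyMeasurable hu
    have hE1 : ∀ x, (1:ℝ) ≤ E x := fun x => Real.one_le_exp (abs_nonneg _)
    have hkey : ∀ x, Real.exp (|f x - c| / M) = E x ^ (1/M) := by
      intro x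
      rw [hE, ← Real.exp_mul, mul_one_div]
    -- integrability of E ^ (1/M)
    have hgsm : AEStronglyMeasurable (fun x => Real.exp (|f x - c| / M)) μ' := by
      have := Real.continuous_exp.comp_aestronglyMeasurable (hu.mul_const M⁻¹)
      simpa [Function.comp, div_eq_mul_inv] using this
    have hgi : Integrable (fun x => E x ^ (1/M)) μ' := by
      refine Integrable.mono hint ?_ ?_
      · have := hgsm
        simpa only [hkey] using this
      · filter_upwards with x
        rw [Real.norm_eq_abs, Real.norm_eq_abs,
          abs_of_nonneg (Real.rpow_nonneg (le_trans zero_le_one (hE1 x)) _),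
          abs_of_nonneg (le_trans zero_le_one (hE1 x))]
        calc E x ^ (1/M) ≤ E x ^ (1:ℝ) :=
              Real.rpow_le_rpow_of_exponent_le (hE1 x) hθ1
          _ = E x := Real.rpow_one _
    -- Jensen's inequality
    have hjensen : (⨍ x, E x ^ (1/M) ∂μ') ≤ (⨍ x, E x ∂μ') ^ (1/M) := by
      have hconc : ConcaveOn ℝ (Set.Ici 0) fun y : ℝ => y ^ (1/M) :=
        Real.concaveOn_rpow hθ0.le hθ1
      have hcont : ContinuousOn (fun y : ℝ => y ^ (1/M)) (Set.Ici 0) := fun y hy =>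
        (Real.continuousAt_rpow_const y (1/M) (Or.inr hθ0.le)).continuousWithinAt
      exact hconc.le_map_average hcont isClosed_Ici
        (Filter.Eventually.of_forall fun x => le_trans zero_le_one (hE1 x))
        hint hgi
    -- identify averages with avgm
    have havg : ∀ F : (Fin n → ℝ) → ℝ, (⨍ x, F x ∂μ') = avgm MeasureTheory.volume B F := by
      intro F
      rw [hμ', avgm]
      rw [MeasureTheory.setAverage_eq, smul_eq_mul]
      rfl
    -- 1 ≤ ⨍ E and ⨍ E ≤ C₀
    have havgE_le : (⨍ x, E x ∂μ') ≤ C₀ := by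
      rw [havg]
      exact hC B hB
    have h1_avgE : (1:ℝ) ≤ ⨍ x, E x ∂μ' := by
      rw [MeasureTheory.average_eq, smul_eq_mul]
      have hint1 : (∫ _x, (1:ℝ) ∂μ') ≤ ∫ x, E x ∂μ' :=
        integral_mono (integrable_const 1) hint hE1
      rw [integral_const, smul_eq_mul, mul_one] at hint1
      have ht : (0:ℝ) < (μ' Set.univ).toReal :=
        ENNReal.toReal_pos (Measure.measure_univ_ne_zero.2 (NeZero.ne μ'))
          (measure_ne_top _ _)
      rw [inv_mul_eq_div, le_div_iff₀ (show (0:ℝ) < μ'.real Set.univ from ht), one_mul]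
      exact hint1
    have hC1 : (1:ℝ) ≤ C₀ := le_trans h1_avgE havgE_le
    -- C₀ ^ (1/M) ≤ 2
    have hC2 : C₀ ^ (1/M) ≤ 2 := by
      have hlogb : Real.logb 2 C₀ ≤ M := le_max_right _ _
      have hlog2 : (0:ℝ) < Real.log 2 := Real.log_pos one_lt_two
      have hlogC : Real.log C₀ ≤ M * Real.log 2 := by
        rw [Real.logb, div_le_iff₀ hlog2] at hlogb
        linarith
      rw [Real.rpow_def_of_pos (lt_of_lt_of_le one_pos hC1)]
      rw [show (2:ℝ) = Real.exp (Real.log 2) from (Real.exp_log two_pos).symm]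
      apply Real.exp_le_exp.mpr
      rw [mul_one_div, div_le_iff₀ hM0]
      linarith
    calc avgm MeasureTheory.volume B (fun x => Real.exp (|f x - c| / M))
        = ⨍ x, E x ^ (1/M) ∂μ' := by
          rw [← havg]
          exact average_congr (Filter.Eventually.of_forall fun x => hkey x)
      _ ≤ (⨍ x, E x ∂μ') ^ (1/M) := hjensen
      _ ≤ C₀ ^ (1/M) := Real.rpow_le_rpow (le_trans zero_le_one h1_avgE) havgE_le hθ0.le
      _ ≤ 2 := hC2
  · -- Non-integrable case: the Bochner integral is 0, so 1 belongs to the set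
    refine le_trans (csInf_le hbdd ⟨one_pos, ?_⟩) hM1
    have h0 : (∫ x in B, Real.exp (|f x - c| / 1) ∂MeasureTheory.volume) = 0 := by
      simp only [div_one]
      exact integral_undef hint
    rw [avgm, h0, mul_zero]
    norm_num
end
end

section
/- Let f be a real-valued locally integrable function on ℝⁿ such that e^f ∈ A₂. Then f ∈ 𝒷ℳ𝒪 with ‖f‖_{𝒷ℳ𝒪} ≤ 1 + log₂([e^f]_{A₂}). -/
open MeasureTheory

noncomputable section

/-! ### Auxiliary lemmas -/

lemma cube_compact {n : ℕ} {Q : Set (Fin n → ℝ)} (hQ : IsCube Q) : IsCompact Q := by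
  obtain ⟨c, h, _, rfl⟩ := hQ
  exact isCompact_univ_pi fun _ => isCompact_Icc

lemma cube_vol_pos {n : ℕ} {Q : Set (Fin n → ℝ)} (hQ : IsCube Q) :
    0 < volume Q ∧ volume Q ≠ ⊤ := by
  obtain ⟨c, h, hh, rfl⟩ := hQ
  rw [volume_pi_pi]
  simp only [Real.volume_Icc, add_sub_cancel_left, Finset.prod_const, Finset.card_univ,
    Fintype.card_fin]
  constructor
  · exact ENNReal.pow_pos (ENNReal.ofReal_pos.mpr hh) n
  · exact (ENNReal.pow_lt_top ENNReal.ofReal_lt_top).ne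

lemma cube_volR_pos {n : ℕ} {Q : Set (Fin n → ℝ)} (hQ : IsCube Q) :
    0 < (volume Q).toReal :=
  ENNReal.toReal_pos (cube_vol_pos hQ).1.ne' (cube_vol_pos hQ).2

/-- If `∫ s = 0` over `Q` then the average of `e^s` is at least 1. -/
lemma one_le_avg_exp {n : ℕ} {Q : Set (Fin n → ℝ)} (hQ : IsCube Q)
    {s : (Fin n → ℝ) → ℝ} (hs : IntegrableOn s Q volume)
    (hes : IntegrableOn (fun x => Real.exp (s x)) Q volume)
    (hzero : ∫ x in Q, s x = 0) :
    1 ≤ (volume Q).toReal⁻¹ * ∫ x in Q, Real.exp (s x) := by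
  have hV := cube_volR_pos hQ
  have hconst : IntegrableOn (fun _ : Fin n → ℝ => (1 : ℝ)) Q volume :=
    integrableOn_const (cube_vol_pos hQ).2
  have h1 : ∫ x in Q, ((1 : ℝ) + s x) ≤ ∫ x in Q, Real.exp (s x) := by
    refine integral_mono (hconst.add hs) hes fun x => ?_
    have := Real.add_one_le_exp (s x)
    linarith
  rw [integral_add hconst hs, hzero, setIntegral_const] at h1
  simp only [smul_eq_mul, mul_one, add_zero] at h1
  calc (1 : ℝ) = (volume Q).toReal⁻¹ * (volume Q).toReal := by
        rw [inv_mul_cancel₀ hV.ne']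
    _ ≤ (volume Q).toReal⁻¹ * ∫ x in Q, Real.exp (s x) :=
        mul_le_mul_of_nonneg_left h1 (inv_nonneg.mpr hV.le)

/-- Bernoulli/tangent-line Jensen: average of `h^p` is at most `c^p`. -/
lemma avg_rpow_le {n : ℕ} {Q : Set (Fin n → ℝ)} (hQ : IsCube Q)
    {h : (Fin n → ℝ) → ℝ} (hpos : ∀ x, 0 ≤ h x)
    (hh : IntegrableOn h Q volume) {p c : ℝ} (hp0 : 0 < p) (hp1 : p ≤ 1) (hc : 0 < c)
    (hhp : IntegrableOn (fun x => h x ^ p) Q volume)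
    (havg : (volume Q).toReal⁻¹ * ∫ x in Q, h x ≤ c) :
    (volume Q).toReal⁻¹ * ∫ x in Q, h x ^ p ≤ c ^ p := by
  have hV := cube_volR_pos hQ
  set K := c ^ (p - 1) with hK
  have hKpos : 0 < K := Real.rpow_pos_of_pos hc _
  have hKc : K * c = c ^ p := by
    rw [hK]
    conv_rhs => rw [show p = p - 1 + 1 by ring]
    rw [Real.rpow_add_one hc.ne']
  have hpt : ∀ x, h x ^ p ≤ c ^ p + p * K * (h x - c) := by
    intro x
    have hs : (-1 : ℝ) ≤ h x / c - 1 := by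
      have : 0 ≤ h x / c := div_nonneg (hpos x) hc.le
      linarith
    have hb := rpow_one_add_le_one_add_mul_self hs hp0.le hp1
    have h1 : (1 : ℝ) + (h x / c - 1) = h x / c := by ring
    rw [h1] at hb
    have h2 : (h x / c) ^ p = h x ^ p / c ^ p := Real.div_rpow (hpos x) hc.le p
    rw [h2] at hb
    have hcp : 0 < c ^ p := Real.rpow_pos_of_pos hc _
    have := mul_le_mul_of_nonneg_left hb hcp.le
    rw [mul_div_cancel₀ _ hcp.ne'] at this
    calc h x ^ p ≤ c ^ p * (1 + p * (h x / c - 1)) := this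
      _ = c ^ p + p * (c ^ p / c) * (h x - c) := by
          field_simp
      _ = c ^ p + p * K * (h x - c) := by
          rw [← hKc]
          field_simp
  have hconst : IntegrableOn (fun _ : Fin n → ℝ => c) Q volume :=
    integrableOn_const (cube_vol_pos hQ).2
  have hconst' : IntegrableOn (fun _ : Fin n → ℝ => c ^ p) Q volume :=
    integrableOn_const (cube_vol_pos hQ).2
  have hsub : IntegrableOn (fun x => h x - c) Q volume := hh.sub hconst
  have hmul : IntegrableOn (fun x => p * K * (h x - c)) Q volume := hsub.const_mul _
  have hrhs : IntegrableOn (fun x => c ^ p + p * K * (h x - c)) Q volume := hconst'.add hmul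
  have hint : ∫ x in Q, h x ^ p ≤ ∫ x in Q, (c ^ p + p * K * (h x - c)) :=
    integral_mono hhp hrhs fun x => hpt x
  rw [integral_add hconst' hmul, setIntegral_const, integral_const_mul,
      integral_sub hh hconst, setIntegral_const, measureReal_def] at hint
  set V := (volume Q).toReal
  have hVinv : 0 < V⁻¹ := inv_pos.mpr hV
  have h3 : V⁻¹ * ∫ x in Q, h x ^ p ≤ V⁻¹ * (V * c ^ p + p * K * ((∫ x in Q, h x) - V * c)) := by
    apply mul_le_mul_of_nonneg_left _ hVinv.le
    simpa [smul_eq_mul] using hint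
  refine h3.trans ?_
  have hVne : V ≠ 0 := hV.ne'
  have hIle : V⁻¹ * (∫ x in Q, h x) - c ≤ 0 := by linarith
  have expand : V⁻¹ * (V * c ^ p + p * K * ((∫ x in Q, h x) - V * c))
      = c ^ p + (p * K) * (V⁻¹ * (∫ x in Q, h x) - c) := by
    field_simp
  rw [expand]
  nlinarith [mul_nonneg hp0.le hKpos.le]


lemma apRatio_two {n : ℕ} (f : (Fin n → ℝ) → ℝ) (Q : Set (Fin n → ℝ)) :
    apRatio 2 (fun x => Real.exp (f x)) Q
      = ((volume Q).toReal⁻¹ * ∫ x in Q, Real.exp (f x))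
        * ((volume Q).toReal⁻¹ * ∫ x in Q, Real.exp (-f x)) := by
  have h1 : (1 - 2 / (2 - 1) : ℝ) = -1 := by norm_num
  have h2 : ∀ x : Fin n → ℝ, Real.exp (f x) ^ (-1 : ℝ) = Real.exp (-f x) := fun x => by
    rw [Real.rpow_neg_one, ← Real.exp_neg]
  have h3 : ((2 : ℝ) - 1) = 1 := by norm_num
  have h1' : (1 - 2 / 1 : ℝ) = -1 := by norm_num
  simp only [apRatio, avgQ, avgm, h1, h1', h2, h3, Real.rpow_one]

/-- With `g = f - f_Q`: `1 ≤ avg e^g`, `1 ≤ avg e^{-g}`, and their product equals the `A₂` ratio. -/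
lemma avg_exp_facts {n : ℕ} {f : (Fin n → ℝ) → ℝ} {Q : Set (Fin n → ℝ)} (hQ : IsCube Q)
    (hfi : IntegrableOn f Q volume)
    (h1 : IntegrableOn (fun x => Real.exp (f x - avgQ Q f)) Q volume)
    (h2 : IntegrableOn (fun x => Real.exp (avgQ Q f - f x)) Q volume) :
    1 ≤ (volume Q).toReal⁻¹ * ∫ x in Q, Real.exp (f x - avgQ Q f) ∧
    1 ≤ (volume Q).toReal⁻¹ * ∫ x in Q, Real.exp (avgQ Q f - f x) ∧
    ((volume Q).toReal⁻¹ * ∫ x in Q, Real.exp (f x - avgQ Q f))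
      * ((volume Q).toReal⁻¹ * ∫ x in Q, Real.exp (avgQ Q f - f x))
      = apRatio 2 (fun x => Real.exp (f x)) Q := by
  have hV := cube_volR_pos hQ
  have hconst : IntegrableOn (fun _ : Fin n → ℝ => avgQ Q f) Q volume :=
    integrableOn_const (cube_vol_pos hQ).2
  have hzero : ∫ x in Q, (f x - avgQ Q f) = 0 := by
    rw [integral_sub hfi hconst, setIntegral_const, smul_eq_mul, measureReal_def]
    simp only [avgQ, avgm]
    field_simp
    simp
  have hzero' : ∫ x in Q, (avgQ Q f - f x) = 0 := by
    rw [integral_sub hconst hfi, setIntegral_const, smul_eq_mul, measureReal_def]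
    simp only [avgQ, avgm]
    field_simp
    simp
  refine ⟨one_le_avg_exp hQ (hfi.sub hconst) h1 hzero,
    one_le_avg_exp hQ (hconst.sub hfi) h2 hzero', ?_⟩
  rw [apRatio_two]
  have e1 : ∀ x : Fin n → ℝ, Real.exp (f x - avgQ Q f)
      = Real.exp (f x) * Real.exp (-avgQ Q f) := fun x => by
    rw [← Real.exp_add]; ring_nf
  have e2 : ∀ x : Fin n → ℝ, Real.exp (avgQ Q f - f x)
      = Real.exp (-f x) * Real.exp (avgQ Q f) := fun x => by
    rw [← Real.exp_add]; ring_nf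
  simp only [e1, e2, integral_mul_const]
  calc ((volume Q).toReal⁻¹ * ((∫ x in Q, Real.exp (f x)) * Real.exp (-avgQ Q f)))
        * ((volume Q).toReal⁻¹ * ((∫ x in Q, Real.exp (-f x)) * Real.exp (avgQ Q f)))
      = (((volume Q).toReal⁻¹ * ∫ x in Q, Real.exp (f x))
          * ((volume Q).toReal⁻¹ * ∫ x in Q, Real.exp (-f x)))
        * (Real.exp (-avgQ Q f) * Real.exp (avgQ Q f)) := by ring
    _ = ((volume Q).toReal⁻¹ * ∫ x in Q, Real.exp (f x))
          * ((volume Q).toReal⁻¹ * ∫ x in Q, Real.exp (-f x)) := by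
        rw [← Real.exp_add, neg_add_cancel, Real.exp_zero, mul_one]

lemma exp_integrable_shift {n : ℕ} {u : (Fin n → ℝ) → ℝ} {Q : Set (Fin n → ℝ)} {a : ℝ}
    (h : IntegrableOn (fun x => Real.exp (u x)) Q volume) :
    IntegrableOn (fun x => Real.exp (u x + a)) Q volume := by
  have : (fun x => Real.exp (u x + a)) = fun x => Real.exp (u x) * Real.exp a := by
    funext x; rw [Real.exp_add]
  rw [this]
  exact h.mul_const _

lemma ratio_dich {n : ℕ} {f : (Fin n → ℝ) → ℝ} (hf : LocallyIntegrable f volume)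
    {Q : Set (Fin n → ℝ)} (hQ : IsCube Q) :
    apRatio 2 (fun x => Real.exp (f x)) Q = 0 ∨ 1 ≤ apRatio 2 (fun x => Real.exp (f x)) Q := by
  by_cases h1 : IntegrableOn (fun x => Real.exp (f x)) Q volume
  · by_cases h2 : IntegrableOn (fun x => Real.exp (-f x)) Q volume
    · right
      have hfi := hf.integrableOn_isCompact (cube_compact hQ)
      have he1 : IntegrableOn (fun x => Real.exp (f x - avgQ Q f)) Q volume := by
        have e : (fun x => Real.exp (f x - avgQ Q f))
            = fun x => Real.exp (f x) * Real.exp (-avgQ Q f) := by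
          funext x; rw [← Real.exp_add]; ring_nf
        rw [e]; exact h1.mul_const _
      have he2 : IntegrableOn (fun x => Real.exp (avgQ Q f - f x)) Q volume := by
        have e : (fun x => Real.exp (avgQ Q f - f x))
            = fun x => Real.exp (-f x) * Real.exp (avgQ Q f) := by
          funext x; rw [← Real.exp_add]; ring_nf
        rw [e]; exact h2.mul_const _
      obtain ⟨hA1, hB1, hABeq⟩ := avg_exp_facts hQ hfi he1 he2
      rw [← hABeq]; nlinarith
    · left; rw [apRatio_two, integral_undef h2]; simp
  · left; rw [apRatio_two, integral_undef h1]; simp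

lemma logb_apConst_nonneg {n : ℕ} {f : (Fin n → ℝ) → ℝ} (hf : LocallyIntegrable f volume)
    (hA : MemAp 2 (fun x => Real.exp (f x))) :
    0 ≤ Real.logb 2 (apConst 2 (fun x => Real.exp (f x))) := by
  set w := fun x : Fin n → ℝ => Real.exp (f x) with hw
  by_cases hc : 1 ≤ apConst 2 w
  · exact Real.logb_nonneg one_lt_two hc
  · have hzero : ∀ r ∈ apSet 2 w, r = 0 := by
      rintro r ⟨Q, hQ, rfl⟩
      rcases ratio_dich hf hQ with h | h
      · exact h
      · exact absurd (h.trans (le_csSup hA ⟨Q, hQ, rfl⟩)) hc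
    have hcube : IsCube (Set.univ.pi fun _ : Fin n => Set.Icc (0:ℝ) (0 + 1)) :=
      ⟨fun _ => 0, 1, one_pos, rfl⟩
    have hne : (apSet 2 w).Nonempty := ⟨_, _, hcube, rfl⟩
    have hC0 : apConst 2 w = 0 := by
      refine le_antisymm (Real.sSup_le (fun r hr => (hzero r hr).le) le_rfl) ?_
      obtain ⟨r, hr⟩ := hne
      have h0 := hzero r hr
      rw [← h0]
      exact le_csSup hA hr
    rw [hC0, Real.logb_zero]

lemma osc_le {n : ℕ} {f : (Fin n → ℝ) → ℝ} (hf : LocallyIntegrable f volume)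
    (hA : MemAp 2 (fun x => Real.exp (f x)))
    {Q : Set (Fin n → ℝ)} (hQ : IsCube Q) :
    oscExp Q f ≤ 1 + Real.logb 2 (apConst 2 (fun x => Real.exp (f x))) := by
  have hlog := logb_apConst_nonneg hf hA
  set C := apConst 2 (fun x => Real.exp (f x)) with hCdef
  set L := 1 + Real.logb 2 C with hLdef
  have hL1 : 1 ≤ L := by rw [hLdef]; linarith
  have hLpos : 0 < L := by linarith
  have hV := cube_volR_pos hQ
  set V := (volume Q).toReal with hVdef
  set g : (Fin n → ℝ) → ℝ := fun x => f x - avgQ Q f with hg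
  have hmg : AEStronglyMeasurable g (volume.restrict Q) :=
    (hf.aestronglyMeasurable.sub aestronglyMeasurable_const).restrict
  rw [oscExp, expLNorm]
  have hbdd : BddBelow {l : ℝ | 0 < l ∧
      avgm volume Q (fun x => Real.exp (|f x - avgQ Q f| / l)) ≤ 2} :=
    ⟨0, fun l hl => hl.1.le⟩
  by_cases hI : IntegrableOn (fun x => Real.exp |g x|) Q volume
  · -- integrable case: show L belongs to the defining set
    have habs : ∀ x, Real.exp (g x) ≤ Real.exp |g x| :=
      fun x => Real.exp_le_exp.mpr (le_abs_self _)
    have hexpg : IntegrableOn (fun x => Real.exp (g x)) Q volume := by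
      refine hI.mono' (Real.continuous_exp.comp_aestronglyMeasurable hmg)
        (Filter.Eventually.of_forall fun x => ?_)
      rw [Real.norm_eq_abs, abs_of_pos (Real.exp_pos _)]
      exact habs x
    have hexpng : IntegrableOn (fun x => Real.exp (avgQ Q f - f x)) Q volume := by
      refine hI.mono' (Real.continuous_exp.comp_aestronglyMeasurable
        ((aestronglyMeasurable_const.sub hf.aestronglyMeasurable.restrict)))
        (Filter.Eventually.of_forall fun x => ?_)
      rw [Real.norm_eq_abs, abs_of_pos (Real.exp_pos _)]
      have : avgQ Q f - f x = -g x := by rw [hg]; ring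
      rw [this]
      exact Real.exp_le_exp.mpr (neg_le_abs _)
    have hfi : IntegrableOn f Q volume := hf.integrableOn_isCompact (cube_compact hQ)
    obtain ⟨hA1, hB1, hABeq⟩ := avg_exp_facts hQ hfi hexpg hexpng
    set A := V⁻¹ * ∫ x in Q, Real.exp (f x - avgQ Q f) with hAdef
    set B := V⁻¹ * ∫ x in Q, Real.exp (avgQ Q f - f x) with hBdef
    have hRle : apRatio 2 (fun x => Real.exp (f x)) Q ≤ C := le_csSup hA ⟨Q, hQ, rfl⟩
    have hABle : A * B ≤ C := hABeq ▸ hRle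
    have hC1 : (1:ℝ) ≤ C := le_trans (by nlinarith) hABle
    have hAC : A ≤ C := by nlinarith
    have hBC : B ≤ C := by nlinarith
    -- avg of exp|g| is at most 2C
    have hptw : ∀ x, Real.exp |g x| ≤ Real.exp (f x - avgQ Q f) + Real.exp (avgQ Q f - f x) := by
      intro x
      rcases abs_cases (g x) with ⟨h, _⟩ | ⟨h, _⟩
      · rw [h, hg]
        have := Real.exp_pos (avgQ Q f - f x)
        linarith
      · rw [h, hg, show -(f x - avgQ Q f) = avgQ Q f - f x by ring]
        have := Real.exp_pos (f x - avgQ Q f)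
        linarith
    have hIle : ∫ x in Q, Real.exp |g x|
        ≤ (∫ x in Q, Real.exp (f x - avgQ Q f)) + ∫ x in Q, Real.exp (avgQ Q f - f x) := by
      rw [← integral_add hexpg hexpng]
      exact integral_mono hI (hexpg.add hexpng) hptw
    have havgabs : V⁻¹ * ∫ x in Q, Real.exp |g x| ≤ 2 * C := by
      have h1 : V⁻¹ * ∫ x in Q, Real.exp |g x| ≤ A + B := by
        rw [hAdef, hBdef, ← mul_add]
        exact mul_le_mul_of_nonneg_left hIle (inv_nonneg.mpr hV.le)
      linarith
    -- integrability of exp(|g|/L)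
    have hdivle : ∀ x, Real.exp (|g x| / L) ≤ Real.exp |g x| := fun x =>
      Real.exp_le_exp.mpr (div_le_self (abs_nonneg _) hL1)
    have hintp : IntegrableOn (fun x => Real.exp (|g x| / L)) Q volume := by
      refine hI.mono' ((Real.continuous_exp.comp
        (continuous_abs.div_const L)).comp_aestronglyMeasurable hmg)
        (Filter.Eventually.of_forall fun x => ?_)
      rw [Real.norm_eq_abs, abs_of_pos (Real.exp_pos _)]
      exact hdivle x
    have hform : ∀ x, Real.exp (|g x| / L) = Real.exp |g x| ^ ((1:ℝ)/L) := by
      intro x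
      rw [← Real.exp_mul, mul_one_div]
    have hintp' : IntegrableOn (fun x => Real.exp |g x| ^ ((1:ℝ)/L)) Q volume := by
      have e : (fun x => Real.exp |g x| ^ ((1:ℝ)/L)) = fun x => Real.exp (|g x| / L) := by
        funext x; rw [hform]
      rw [e]; exact hintp
    have hC2 : (0:ℝ) < 2 * C := by linarith
    have hjen := avg_rpow_le hQ (fun x => (Real.exp_pos |g x|).le) hI
      (p := 1/L) (c := 2*C) (by positivity) ((div_le_one hLpos).mpr hL1) hC2 hintp' havgabs
    have hfinal : avgm volume Q (fun x => Real.exp (|g x| / L)) ≤ 2 := by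
      rw [avgm]
      have e : ∫ x in Q, Real.exp (|g x| / L) = ∫ x in Q, Real.exp |g x| ^ ((1:ℝ)/L) := by
        congr 1; funext x; rw [hform]
      rw [e]
      refine le_trans hjen ?_
      have hCpos : (0:ℝ) < C := by linarith
      have h2L : (2:ℝ) ^ L = 2 * C := by
        rw [hLdef, Real.rpow_add two_pos, Real.rpow_one,
          Real.rpow_logb two_pos (by norm_num) hCpos]
      rw [← h2L, ← Real.rpow_mul (by norm_num : (0:ℝ) ≤ 2),
        mul_one_div_cancel hLpos.ne', Real.rpow_one]
    refine csInf_le hbdd ⟨hLpos, ?_⟩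
    exact hfinal
  · -- non-integrable case: l = 1 belongs to the set
    have h1mem : (1:ℝ) ∈ {l : ℝ | 0 < l ∧
        avgm volume Q (fun x => Real.exp (|f x - avgQ Q f| / l)) ≤ 2} := by
      refine ⟨one_pos, ?_⟩
      have e : (fun x => Real.exp (|f x - avgQ Q f| / 1)) = fun x => Real.exp |g x| := by
        funext x; rw [div_one, hg]
      rw [avgm, e, integral_undef hI]
      norm_num
    exact le_trans (csInf_le hbdd h1mem) hL1

/-- If `e^f ∈ A₂` then `f ∈ 𝒷ℳ𝒪` with `‖f‖_{𝒷ℳ𝒪} ≤ 1 + log₂ [e^f]_{A₂}`. -/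
theorem statement5 {n : ℕ} (f : (Fin n → ℝ) → ℝ)
    (hf : LocallyIntegrable f MeasureTheory.volume)
    (hA : MemAp 2 (fun x => Real.exp (f x))) :
    FiniteBMO f ∧
    calBMONorm f ≤ 1 + Real.logb 2 (apConst 2 (fun x => Real.exp (f x))) := by
  have hlog := logb_apConst_nonneg hf hA
  have key : ∀ r ∈ bmoSet f, r ≤ 1 + Real.logb 2 (apConst 2 (fun x => Real.exp (f x))) := by
    rintro r ⟨Q, hQ, rfl⟩
    exact osc_le hf hA hQ
  exact ⟨⟨_, key⟩, Real.sSup_le key (by linarith)⟩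
end
end

section
/- Let f be a real-valued locally integrable function and ℬ a basis of sets. Then e^f ∈ A_{2,ℬ} (the A₂ class defined with averages over sets in ℬ) if and only if C₀ := sup_{B ∈ ℬ} avg_B e^{|f - f_B|} < ∞. Moreover, if e^f ∈ A_{2,ℬ} then C₀ ≤ 2[e^f]_{A_{2,ℬ}}. -/
open MeasureTheory

noncomputable section

lemma my_average_mono {α : Type*} [MeasurableSpace α] {μ : Measure α} {f g : α → ℝ}
    (hf : Integrable f μ) (hg : Integrable g μ) (h : ∀ x, f x ≤ g x) :
    ⨍ x, f x ∂μ ≤ ⨍ x, g x ∂μ := by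
  rw [average_eq (μ := μ), average_eq (μ := μ)]
  simp only [smul_eq_mul]
  have : ∫ x, f x ∂μ ≤ ∫ x, g x ∂μ := integral_mono hf hg h
  have h0 : (0:ℝ) ≤ (μ.real Set.univ)⁻¹ := by positivity
  nlinarith

lemma my_average_add {α : Type*} [MeasurableSpace α] {μ : Measure α} {f g : α → ℝ}
    (hf : Integrable f μ) (hg : Integrable g μ) :
    ⨍ x, (f x + g x) ∂μ = (⨍ x, f x ∂μ) + ⨍ x, g x ∂μ := by
  rw [average_eq (μ := μ), average_eq (μ := μ), average_eq (μ := μ),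
    integral_add hf hg, smul_add]

lemma my_average_const_mul {α : Type*} [MeasurableSpace α] {μ : Measure α} (r : ℝ) (f : α → ℝ) :
    ⨍ x, (r * f x) ∂μ = r * ⨍ x, f x ∂μ := by
  rw [average_eq (μ := μ), average_eq (μ := μ), integral_const_mul]
  simp only [smul_eq_mul]; ring

-- Jensen: exp (⨍ g) ≤ ⨍ exp g
lemma jensen_exp {α : Type*} [MeasurableSpace α] (μ : Measure α) [IsFiniteMeasure μ] [NeZero μ]
    (g : α → ℝ) (hgi : Integrable g μ) (hei : Integrable (fun x => Real.exp (g x)) μ) :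
    Real.exp (⨍ x, g x ∂μ) ≤ ⨍ x, Real.exp (g x) ∂μ :=
  convexOn_exp.map_average_le Real.continuous_exp.continuousOn isClosed_univ
    (Filter.Eventually.of_forall fun _ => Set.mem_univ _) hgi hei

lemma avg_nonneg' {α : Type*} [MeasurableSpace α] (μ : Measure α)
    (g : α → ℝ) (hg : ∀ x, 0 ≤ g x) : 0 ≤ ⨍ x, g x ∂μ :=
  integral_nonneg hg

-- key1
lemma key1 {α : Type*} [MeasurableSpace α] (μ : Measure α) [IsFiniteMeasure μ] [NeZero μ]
    (g : α → ℝ) (hg : AEStronglyMeasurable g μ) :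
    ⨍ x, Real.exp |g x - ⨍ y, g y ∂μ| ∂μ ≤
      2 * ((⨍ x, Real.exp (g x) ∂μ) * ⨍ x, Real.exp (-g x) ∂μ) := by
  set c := ⨍ y, g y ∂μ with hc
  have hE : 0 ≤ ⨍ x, Real.exp (g x) ∂μ := avg_nonneg' μ _ fun x => (Real.exp_pos _).le
  have hE' : 0 ≤ ⨍ x, Real.exp (-g x) ∂μ := avg_nonneg' μ _ fun x => (Real.exp_pos _).le
  by_cases h : Integrable (fun x => Real.exp |g x - c|) μ
  · -- g integrable
    have hgi : Integrable g μ := by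
      refine Integrable.mono (h.add (integrable_const |c|)) hg ?_
      refine Filter.Eventually.of_forall fun x => ?_
      have h1 : |g x| ≤ |g x - c| + |c| := by
        calc |g x| = |(g x - c) + c| := by ring_nf
        _ ≤ |g x - c| + |c| := abs_add_le _ _
      have h2 : |g x - c| + 1 ≤ Real.exp |g x - c| := Real.add_one_le_exp _
      have h3 : (0:ℝ) ≤ Real.exp |g x - c| + |c| := by positivity
      simp only [Pi.add_apply, Real.norm_eq_abs, abs_of_nonneg h3]
      linarith
    have hmeas : AEStronglyMeasurable (fun x => Real.exp (g x - c)) μ :=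
      (Real.continuous_exp.comp_aestronglyMeasurable (hg.sub aestronglyMeasurable_const))
    have hi1 : Integrable (fun x => Real.exp (g x - c)) μ := by
      refine h.mono hmeas (Filter.Eventually.of_forall fun x => ?_)
      simp only [Real.norm_eq_abs, abs_of_pos (Real.exp_pos _)]
      exact Real.exp_le_exp.2 (le_abs_self _)
    have hi2 : Integrable (fun x => Real.exp (c - g x)) μ := by
      refine h.mono ?_ (Filter.Eventually.of_forall fun x => ?_)
      · exact Real.continuous_exp.comp_aestronglyMeasurable
          (aestronglyMeasurable_const.sub hg)
      · simp only [Real.norm_eq_abs, abs_of_pos (Real.exp_pos _)]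
        refine Real.exp_le_exp.2 ?_
        have := le_abs_self (c - g x)
        rw [abs_sub_comm] at this
        linarith
    have hie : Integrable (fun x => Real.exp (g x)) μ := by
      have heq : (fun x => Real.exp (g x)) = fun x => Real.exp c * Real.exp (g x - c) := by
        funext x; rw [← Real.exp_add]; ring_nf
      rw [heq]; exact hi1.const_mul _
    have hie' : Integrable (fun x => Real.exp (-g x)) μ := by
      have heq : (fun x => Real.exp (-g x)) = fun x => Real.exp (-c) * Real.exp (c - g x) := by
        funext x; rw [← Real.exp_add]; ring_nf
      rw [heq]; exact hi2.const_mul _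
    have hj1 : Real.exp c ≤ ⨍ x, Real.exp (g x) ∂μ := jensen_exp μ g hgi hie
    have hj2 : Real.exp (-c) ≤ ⨍ x, Real.exp (-g x) ∂μ := by
      have := jensen_exp μ (fun x => -g x) hgi.neg hie'
      rwa [average_neg] at this
    calc ⨍ x, Real.exp |g x - c| ∂μ
        ≤ ⨍ x, (Real.exp (g x - c) + Real.exp (c - g x)) ∂μ := by
          refine my_average_mono h (hi1.add hi2) fun x => ?_
          rcases abs_cases (g x - c) with ⟨he, _⟩ | ⟨he, _⟩
          · rw [he]; nlinarith [Real.exp_pos (c - g x)]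
          · rw [he]; have heq : -(g x - c) = c - g x := by ring
            rw [heq]; nlinarith [Real.exp_pos (g x - c)]
      _ = Real.exp (-c) * (⨍ x, Real.exp (g x) ∂μ) +
            Real.exp c * (⨍ x, Real.exp (-g x) ∂μ) := by
          rw [my_average_add hi1 hi2]
          congr 1
          · rw [← my_average_const_mul]
            congr 1; funext x
            rw [← Real.exp_add]; ring_nf
          · rw [← my_average_const_mul]
            congr 1; funext x
            rw [← Real.exp_add]; ring_nf
      _ ≤ (⨍ x, Real.exp (-g x) ∂μ) * (⨍ x, Real.exp (g x) ∂μ) +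
            (⨍ x, Real.exp (g x) ∂μ) * (⨍ x, Real.exp (-g x) ∂μ) := by
          gcongr
      _ = 2 * ((⨍ x, Real.exp (g x) ∂μ) * ⨍ x, Real.exp (-g x) ∂μ) := by ring
  · have h0 : ⨍ x, Real.exp |g x - c| ∂μ = 0 := by
      rw [average_eq, integral_undef h, smul_zero]
    rw [h0]; positivity

-- key2 : for any c
lemma key2 {α : Type*} [MeasurableSpace α] (μ : Measure α) [IsFiniteMeasure μ] [NeZero μ]
    (g : α → ℝ) (hg : AEStronglyMeasurable g μ) (c : ℝ) :
    (⨍ x, Real.exp (g x) ∂μ) * (⨍ x, Real.exp (-g x) ∂μ) ≤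
      (⨍ x, Real.exp |g x - c| ∂μ) ^ 2 := by
  have hM : 0 ≤ ⨍ x, Real.exp |g x - c| ∂μ := avg_nonneg' μ _ fun x => (Real.exp_pos _).le
  by_cases h1 : Integrable (fun x => Real.exp (g x)) μ
  · by_cases h2 : Integrable (fun x => Real.exp (-g x)) μ
    · have habs : Integrable (fun x => Real.exp |g x - c|) μ := by
        have hi : Integrable (fun x => Real.exp (-c) * Real.exp (g x) +
            Real.exp c * Real.exp (-g x)) μ := (h1.const_mul _).add (h2.const_mul _)
        refine hi.mono ?_ (Filter.Eventually.of_forall fun x => ?_)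
        · exact Real.continuous_exp.comp_aestronglyMeasurable
            ((continuous_abs.comp_aestronglyMeasurable (hg.sub aestronglyMeasurable_const)))
        · simp only [Real.norm_eq_abs, abs_of_pos (Real.exp_pos _)]
          have hb : Real.exp |g x - c| ≤ Real.exp (-c) * Real.exp (g x) +
              Real.exp c * Real.exp (-g x) := by
            rw [← Real.exp_add, ← Real.exp_add]
            rcases abs_cases (g x - c) with ⟨he, _⟩ | ⟨he, _⟩
            · rw [he]
              have heq : -c + g x = g x - c := by ring
              rw [heq]; nlinarith [Real.exp_pos (c + -g x)]
            · rw [he]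
              have heq : c + -g x = -(g x - c) := by ring
              rw [heq]; nlinarith [Real.exp_pos (-c + g x)]
          have hnn := abs_of_nonneg (by positivity :
            (0:ℝ) ≤ Real.exp (-c) * Real.exp (g x) + Real.exp c * Real.exp (-g x))
          rw [hnn]; exact hb
      have hb1 : ⨍ x, Real.exp (g x) ∂μ ≤ Real.exp c * ⨍ x, Real.exp |g x - c| ∂μ := by
        rw [← my_average_const_mul]
        refine my_average_mono h1 (habs.const_mul _) fun x => ?_
        rw [← Real.exp_add]
        exact Real.exp_le_exp.2 (by have := le_abs_self (g x - c); linarith)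
      have hb2 : ⨍ x, Real.exp (-g x) ∂μ ≤ Real.exp (-c) * ⨍ x, Real.exp |g x - c| ∂μ := by
        rw [← my_average_const_mul]
        refine my_average_mono h2 (habs.const_mul _) fun x => ?_
        rw [← Real.exp_add]
        refine Real.exp_le_exp.2 ?_
        have := le_abs_self (c - g x)
        rw [abs_sub_comm] at this
        linarith
      have hone : Real.exp c * Real.exp (-c) = 1 := by
        rw [← Real.exp_add]; simp
      calc (⨍ x, Real.exp (g x) ∂μ) * (⨍ x, Real.exp (-g x) ∂μ)
          ≤ (Real.exp c * ⨍ x, Real.exp |g x - c| ∂μ) *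
              (Real.exp (-c) * ⨍ x, Real.exp |g x - c| ∂μ) :=
            mul_le_mul hb1 hb2 (avg_nonneg' μ _ fun x => (Real.exp_pos _).le) (by positivity)
        _ = (Real.exp c * Real.exp (-c)) * (⨍ x, Real.exp |g x - c| ∂μ) ^ 2 := by ring
        _ = (⨍ x, Real.exp |g x - c| ∂μ) ^ 2 := by rw [hone, one_mul]
    · have h0 : ⨍ x, Real.exp (-g x) ∂μ = 0 := by
        rw [average_eq, integral_undef h2, smul_zero]
      rw [h0, mul_zero]; positivity
  · have h0 : ⨍ x, Real.exp (g x) ∂μ = 0 := by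
      rw [average_eq, integral_undef h1, smul_zero]
    rw [h0, zero_mul]; positivity

open Real in
lemma avgQ_eq_average {n : ℕ} (B : Set (Fin n → ℝ)) (g : (Fin n → ℝ) → ℝ) :
    avgQ B g = ⨍ x, g x ∂(MeasureTheory.volume.restrict B) := by
  have h : (⨍ x, g x ∂(MeasureTheory.volume.restrict B)) =
      ⨍ x in B, g x ∂(MeasureTheory.volume) := rfl
  rw [h, setAverage_eq]
  simp [avgQ, avgm, smul_eq_mul, Measure.real]

lemma avgQ_nonneg {n : ℕ} (B : Set (Fin n → ℝ)) (g : (Fin n → ℝ) → ℝ)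
    (hg : ∀ x, 0 ≤ g x) : 0 ≤ avgQ B g := by
  unfold avgQ avgm
  exact mul_nonneg (by positivity) (integral_nonneg hg)

lemma perB {n : ℕ} (f : (Fin n → ℝ) → ℝ) (hf : AEStronglyMeasurable f MeasureTheory.volume)
    (B : Set (Fin n → ℝ)) (hpos : 0 < MeasureTheory.volume B)
    (hlt : MeasureTheory.volume B < ⊤) :
    avgQ B (fun x => Real.exp |f x - avgQ B f|) ≤
      2 * (avgQ B (fun x => Real.exp (f x)) * avgQ B (fun x => (Real.exp (f x))⁻¹)) ∧
    avgQ B (fun x => Real.exp (f x)) * avgQ B (fun x => (Real.exp (f x))⁻¹) ≤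
      (avgQ B (fun x => Real.exp |f x - avgQ B f|)) ^ 2 := by
  set μ := MeasureTheory.volume.restrict B with hμ
  haveI : IsFiniteMeasure μ := ⟨by rwa [hμ, Measure.restrict_apply_univ]⟩
  haveI : NeZero μ := ⟨Measure.measure_univ_ne_zero.mp
    (by rw [hμ, Measure.restrict_apply_univ]; exact hpos.ne')⟩
  have hinv : (fun x => (Real.exp (f x))⁻¹) = fun x => Real.exp (-f x) :=
    funext fun x => (Real.exp_neg _).symm
  rw [hinv, avgQ_eq_average B f, avgQ_eq_average, avgQ_eq_average, avgQ_eq_average]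
  exact ⟨key1 μ f hf.restrict, key2 μ f hf.restrict _⟩

/-- `e^f ∈ A_{2,ℬ}` iff `C₀ := sup_{B ∈ ℬ} avg_B e^{|f - f_B|} < ∞`; moreover if
`e^f ∈ A_{2,ℬ}` then `C₀ ≤ 2 [e^f]_{A_{2,ℬ}}`. -/
theorem statement6 {n : ℕ} (f : (Fin n → ℝ) → ℝ)
    (hf : LocallyIntegrable f MeasureTheory.volume)
    (ℬ : Set (Set (Fin n → ℝ)))
    (hℬ : ∀ B ∈ ℬ, MeasurableSet B ∧ 0 < MeasureTheory.volume B ∧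
      MeasureTheory.volume B < ⊤) :
    (BddAbove {r : ℝ | ∃ B ∈ ℬ,
        r = avgQ B (fun x => Real.exp (f x)) *
            avgQ B (fun x => (Real.exp (f x))⁻¹)} ↔
     BddAbove {r : ℝ | ∃ B ∈ ℬ, r = avgQ B (fun x => Real.exp |f x - avgQ B f|)}) ∧
    (BddAbove {r : ℝ | ∃ B ∈ ℬ,
        r = avgQ B (fun x => Real.exp (f x)) *
            avgQ B (fun x => (Real.exp (f x))⁻¹)} →
      sSup {r : ℝ | ∃ B ∈ ℬ, r = avgQ B (fun x => Real.exp |f x - avgQ B f|)} ≤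
        2 * sSup {r : ℝ | ∃ B ∈ ℬ,
            r = avgQ B (fun x => Real.exp (f x)) *
                avgQ B (fun x => (Real.exp (f x))⁻¹)}) := by
  have hAM : AEStronglyMeasurable f MeasureTheory.volume := hf.aestronglyMeasurable
  constructor
  · constructor
    · rintro ⟨M, hM⟩
      refine ⟨2 * M, ?_⟩
      rintro r ⟨B, hB, rfl⟩
      obtain ⟨-, hpos, hlt⟩ := hℬ B hB
      have h1 := (perB f hAM B hpos hlt).1
      have hmem := hM ⟨B, hB, rfl⟩
      linarith
    · rintro ⟨M, hM⟩
      refine ⟨(max M 0) ^ 2, ?_⟩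
      rintro r ⟨B, hB, rfl⟩
      obtain ⟨-, hpos, hlt⟩ := hℬ B hB
      have h2 := (perB f hAM B hpos hlt).2
      have hnn : 0 ≤ avgQ B (fun x => Real.exp |f x - avgQ B f|) :=
        avgQ_nonneg _ _ fun x => (Real.exp_pos _).le
      have hMv : avgQ B (fun x => Real.exp |f x - avgQ B f|) ≤ max M 0 :=
        le_trans (hM ⟨B, hB, rfl⟩) (le_max_left _ _)
      calc avgQ B (fun x => Real.exp (f x)) * avgQ B (fun x => (Real.exp (f x))⁻¹)
          ≤ (avgQ B (fun x => Real.exp |f x - avgQ B f|)) ^ 2 := h2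
        _ ≤ (max M 0) ^ 2 := by gcongr
  · intro hbdd
    by_cases hne : ℬ.Nonempty
    · obtain ⟨B0, hB0⟩ := hne
      refine csSup_le ⟨_, B0, hB0, rfl⟩ ?_
      rintro r ⟨B, hB, rfl⟩
      obtain ⟨-, hpos, hlt⟩ := hℬ B hB
      have h1 := (perB f hAM B hpos hlt).1
      have hle : avgQ B (fun x => Real.exp (f x)) * avgQ B (fun x => (Real.exp (f x))⁻¹) ≤
          sSup {r : ℝ | ∃ B ∈ ℬ,
            r = avgQ B (fun x => Real.exp (f x)) *
                avgQ B (fun x => (Real.exp (f x))⁻¹)} := le_csSup hbdd ⟨B, hB, rfl⟩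
      linarith
    · rw [Set.not_nonempty_iff_eq_empty] at hne
      subst hne
      have e1 : {r : ℝ | ∃ B ∈ (∅ : Set (Set (Fin n → ℝ))),
          r = avgQ B (fun x => Real.exp (f x)) *
              avgQ B (fun x => (Real.exp (f x))⁻¹)} = ∅ := by simp
      have e2 : {r : ℝ | ∃ B ∈ (∅ : Set (Set (Fin n → ℝ))),
          r = avgQ B (fun x => Real.exp |f x - avgQ B f|)} = ∅ := by simp
      rw [e1, e2, Real.sSup_empty]
      norm_num
end
end
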